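/- Let L be a finite field of odd characteristic and K a subfield of L with |L| = |K|². Let q = |K| and let β ∈ L satisfy β² ∈ K and β ∉ K. Then the map t ↦ (t + β)/(t − β) is an injection from K into L whose image is exactly {u ∈ L : u^(q+1) = 1 and u ≠ 1}. Consequently the subgroup {u ∈ L : u^(q+1) = 1} of L^× has exactly q + 1 elements, and together with the extra value 1 (assigned to the point at infinity) the map gives a bijection from K ∪ {∞} onto this subgroup. -/

import Mathlib

/-- Let `L` be a finite field of odd characteristic and `K` a subfield with
`|L| = |K|² = q²`, and let `β ∈ L` satisfy `β² ∈ K` and `β ∉ K`. Then `t ↦ (t+β)/(t−β)`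
is injective on `K`, its image is exactly `{u : u^(q+1) = 1, u ≠ 1}`, the norm-one
subgroup `{u : u^(q+1) = 1}` has exactly `q + 1` elements, and adjoining the extra value
`1` (assigned to the point at infinity) the image fills the whole norm-one subgroup. -/
theorem torus_map_image_norm_one {L : Type*} [Field L] [Finite L]
    (hodd : Odd (ringChar L)) (K : Subfield L) (q : ℕ) (hq : Nat.card K = q)
    (hcard : Nat.card L = q ^ 2) (β : L) (hβ2 : β ^ 2 ∈ K) (hβ : β ∉ K) :
    Set.InjOn (fun t : L => (t + β) / (t - β)) (K : Set L) ∧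
    (fun t : L => (t + β) / (t - β)) '' (K : Set L) =
      {u : L | u ^ (q + 1) = 1 ∧ u ≠ 1} ∧
    {u : L | u ^ (q + 1) = 1}.ncard = q + 1 ∧
    (fun t : L => (t + β) / (t - β)) '' (K : Set L) ∪ {1} =
      {u : L | u ^ (q + 1) = 1} := by
  classical
  have : Fintype L := Fintype.ofFinite L
  have : Fintype K := Fintype.ofFinite K
  -- characteristic facts
  have hchar2 : ringChar L ≠ 2 := by
    intro h; rw [h] at hodd; exact (by decide : ¬ Odd 2) hodd
  have htwo : (2 : L) ≠ 0 := Ring.two_ne_zero hchar2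
  have hβ0 : β ≠ 0 := fun h => hβ (h ▸ K.zero_mem)
  have hqcard : Fintype.card K = q := by rw [← Nat.card_eq_fintype_card, hq]
  have hq2 : 2 ≤ q := by rw [← hqcard]; exact Fintype.one_lt_card
  -- q is a power of the characteristic
  set p := ringChar L with hp
  haveI : CharP L p := ringChar.charP L
  obtain ⟨n, hpprime, hcardL⟩ := FiniteField.card L p
  have hq2n : q ^ 2 = p ^ (n : ℕ) := by
    rw [← hcard, Nat.card_eq_fintype_card, hcardL]
  have hqdvd : q ∣ p ^ (n : ℕ) := by
    rw [← hq2n]; exact dvd_pow_self q two_ne_zero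
  obtain ⟨m, hmn, hqm⟩ := (Nat.dvd_prime_pow hpprime).mp hqdvd
  haveI : ExpChar L p := ExpChar.prime hpprime
  have hadd : ∀ x y : L, (x + y) ^ q = x ^ q + y ^ q := by
    intro x y; rw [hqm]; exact add_pow_expChar_pow x y p m
  have hsub : ∀ x y : L, (x - y) ^ q = x ^ q - y ^ q := by
    intro x y; rw [hqm]; exact sub_pow_expChar_pow x y m
  -- membership in K is equivalent to being fixed by x ↦ x^q
  have hKfix : ∀ x ∈ K, x ^ q = x := by
    intro x hx
    have := FiniteField.pow_card (⟨x, hx⟩ : K)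
    rw [hqcard] at this
    simpa using congrArg (fun a : K => (a : L)) this
  have hKcard : (K : Set L).ncard = q := by
    rw [← hq, ← Nat.card_coe_set_eq]
    simp
  have hKeq : (K : Set L) = {x : L | x ^ q = x} := by
    set P : Polynomial L := Polynomial.X ^ q - Polynomial.X with hP
    have hPne : P ≠ 0 := by
      intro h
      have hc : P.coeff q = 1 := by
        rw [hP, Polynomial.coeff_sub, Polynomial.coeff_X_pow, Polynomial.coeff_X,
          if_pos rfl, if_neg (by omega : ¬1 = q)]
        ring
      rw [h] at hc; simp at hc
    have hPdeg : P.natDegree ≤ q := by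
      refine le_trans (Polynomial.natDegree_sub_le _ _) ?_
      simp [Polynomial.natDegree_X_pow, Polynomial.natDegree_X]; omega
    have hsubset : {x : L | x ^ q = x} ⊆ ↑P.roots.toFinset := by
      intro x hx
      simp only [Finset.coe_sort_coe, Multiset.mem_toFinset, Finset.mem_coe]
      rw [Polynomial.mem_roots hPne]
      simp only [Polynomial.IsRoot, hP, Polynomial.eval_sub, Polynomial.eval_pow,
        Polynomial.eval_X]
      rw [hx]; ring
    have hncard : {x : L | x ^ q = x}.ncard ≤ q := by
      refine le_trans (Set.ncard_le_ncard hsubset (Set.toFinite _)) ?_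
      rw [Set.ncard_coe_finset]
      exact le_trans (Multiset.toFinset_card_le _)
        (le_trans (Polynomial.card_roots' P) hPdeg)
    refine Set.eq_of_subset_of_ncard_le (fun x hx => hKfix x hx) ?_ (Set.toFinite _)
    rw [hKcard]; exact hncard
  have hfixK : ∀ x : L, x ^ q = x → x ∈ K := by
    intro x hx
    have : x ∈ (K : Set L) := by rw [hKeq]; exact hx
    exact this
  -- β^q = -β
  have hβq : β ^ q = -β := by
    have h1 : (β ^ q) ^ 2 = β ^ 2 := by
      rw [← pow_mul, mul_comm, pow_mul]; exact hKfix _ hβ2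
    have h0 : (β ^ q - β) * (β ^ q + β) = 0 := by linear_combination h1
    rcases mul_eq_zero.mp h0 with h | h
    · exact absurd (hfixK β (sub_eq_zero.mp h)) hβ
    · exact eq_neg_of_add_eq_zero_left h
  -- denominators nonzero
  have hden : ∀ t ∈ K, t - β ≠ 0 := by
    intro t ht h
    exact hβ ((sub_eq_zero.mp h) ▸ ht)
  have hden' : ∀ t ∈ K, t + β ≠ 0 := by
    intro t ht h
    exact hβ ((eq_neg_of_add_eq_zero_right h) ▸ K.neg_mem ht)
  -- injectivity
  have hinj : Set.InjOn (fun t : L => (t + β) / (t - β)) (K : Set L) := by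
    intro s hs t ht h
    simp only at h
    rw [div_eq_div_iff (hden s hs) (hden t ht)] at h
    have h0 : 2 * β * (t - s) = 0 := by linear_combination h
    rcases mul_eq_zero.mp h0 with h' | h'
    · exact absurd h' (mul_ne_zero htwo hβ0)
    · exact (sub_eq_zero.mp h').symm
  -- image is contained in the norm-one, ≠ 1 set
  have himg_sub : ∀ t ∈ K, ((t + β) / (t - β)) ^ (q + 1) = 1 ∧ (t + β) / (t - β) ≠ 1 := by
    intro t ht
    have hd := hden t ht
    have hd' := hden' t ht
    constructor
    · have huq : ((t + β) / (t - β)) ^ q = (t - β) / (t + β) := by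
        rw [div_pow, hadd, hsub, hKfix t ht, hβq]; ring_nf
      rw [pow_succ, huq]
      field_simp
    · intro h
      rw [div_eq_one_iff_eq hd] at h
      have : 2 * β = 0 := by linear_combination h
      exact (mul_ne_zero htwo hβ0) this
  -- every norm-one u ≠ 1 is in the image
  have hsurj : ∀ u : L, u ^ (q + 1) = 1 → u ≠ 1 →
      ∃ t ∈ K, (t + β) / (t - β) = u := by
    intro u hu1 hune
    have hu0 : u ≠ 0 := by
      intro h; rw [h] at hu1; simp at hu1
    have hd : u - 1 ≠ 0 := sub_ne_zero.mpr hune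
    have huu : u * u⁻¹ = 1 := mul_inv_cancel₀ hu0
    have huq : u ^ q = u⁻¹ := by
      have h : u ^ q * u = 1 := by rw [← pow_succ]; exact hu1
      field_simp
      linear_combination h
    have hinv : u⁻¹ - 1 ≠ 0 := by
      intro h
      exact hune (inv_eq_one.mp (sub_eq_zero.mp h))
    set t : L := β * (u + 1) / (u - 1) with htdef
    have htK : t ∈ K := by
      apply hfixK
      rw [htdef, div_pow, mul_pow, hadd, hsub, hβq, huq, one_pow]
      rw [div_eq_div_iff hinv hd]
      linear_combination (-2 * β) * huu
    have h1 : t - β = 2 * β / (u - 1) := by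
      rw [htdef, div_sub' hd, div_eq_div_iff hd hd]
      ring
    have h2 : t + β = 2 * β * u / (u - 1) := by
      rw [htdef, div_add' _ _ _ hd, div_eq_div_iff hd hd]
      ring
    refine ⟨t, htK, ?_⟩
    rw [h1, h2, div_eq_iff (div_ne_zero (mul_ne_zero htwo hβ0) hd)]
    rw [← mul_div_assoc, div_eq_div_iff hd hd]
    ring
  -- the image equality
  have himg_eq : (fun t : L => (t + β) / (t - β)) '' (K : Set L) =
      {u : L | u ^ (q + 1) = 1 ∧ u ≠ 1} := by
    ext u
    constructor
    · rintro ⟨t, ht, rfl⟩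
      exact himg_sub t ht
    · rintro ⟨hu1, hune⟩
      obtain ⟨t, htK, heq⟩ := hsurj u hu1 hune
      exact ⟨t, htK, heq⟩
  -- union with {1}
  have hunion : (fun t : L => (t + β) / (t - β)) '' (K : Set L) ∪ {1} =
      {u : L | u ^ (q + 1) = 1} := by
    rw [himg_eq]
    ext u
    simp only [Set.mem_union, Set.mem_setOf_eq, Set.mem_singleton_iff]
    constructor
    · rintro (⟨h1, _⟩ | rfl)
      · exact h1
      · exact one_pow _
    · intro h
      by_cases hu : u = 1
      · exact Or.inr hu
      · exact Or.inl ⟨h, hu⟩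
  -- cardinality
  have hone_notmem : (1 : L) ∉ (fun t : L => (t + β) / (t - β)) '' (K : Set L) := by
    rw [himg_eq]; rintro ⟨_, h⟩; exact h rfl
  have hcard1 : {u : L | u ^ (q + 1) = 1}.ncard = q + 1 := by
    rw [← hunion, Set.union_singleton, Set.ncard_insert_of_notMem hone_notmem (Set.toFinite _),
      Set.ncard_image_of_injOn hinj, hKcard]
  exact ⟨hinj, himg_eq, hcard1, hunion⟩
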